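/- Let N ≥ 1 be a natural number, let a_{-N}, …, a_{-1}, a₀ be complex numbers, and let f : (0,∞) → ℂ be continuous. Suppose there are constants C > 0 and δ > 0 such that |f(t) − ∑_{k=1}^{N} a_{-k} t^{-k} − a₀| ≤ C·t for all 0 < t ≤ 1, and |f(t)| ≤ C·e^{-δ t} for all t ≥ 1. Then there exists a function h, analytic on {s ∈ ℂ : Re s > −1} \ {2, …, N}, such that h(s) = s(1−s) · Γ(s)⁻¹ · ∫₀^∞ f(t) t^{s-1} dt for all s with Re s > N, and h satisfies h(0) = 0 and h′(0) = a₀. -/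

import Mathlib

open MeasureTheory Set Filter Asymptotics

noncomputable section AuxHZ

theorem hasMellin_finset_sum {ι : Type*} (t : Finset ι) {s : ℂ}
    (g : ι → ℝ → ℂ) (m : ι → ℂ) (h : ∀ i ∈ t, HasMellin (g i) s (m i)) :
    HasMellin (fun x => ∑ i ∈ t, g i x) s (∑ i ∈ t, m i) := by
  classical
  induction t using Finset.induction_on with
  | empty =>
      simp only [Finset.sum_empty]
      constructor
      · simp only [MellinConvergent, smul_zero]
        exact integrableOn_zero
      · simp [mellin]
  | insert _ _ hnot ih =>
      rename_i i tt
      simp only [Finset.sum_insert hnot]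
      have hi := h i (Finset.mem_insert_self i tt)
      have ht := ih (fun j hj => h j (Finset.mem_insert_of_mem hj))
      have := hasMellin_add hi.1 ht.1
      exact ⟨this.1, by rw [this.2, hi.2, ht.2]⟩

theorem hasMellin_const_smul' {g : ℝ → ℂ} {s m : ℂ} (c : ℂ) (h : HasMellin g s m) :
    HasMellin (fun t => c * g t) s (c * m) := by
  constructor
  · simpa using h.1.const_smul c
  · have := mellin_const_smul g s c
    simp only [smul_eq_mul] at this
    rw [this, h.2]

end AuxHZ

/-- If a continuous function `f` on `(0,∞)` has a short-time expansion
`f(t) = ∑_{k=1}^N a_{-k} t^{-k} + a₀ + O(t)` and decays exponentially at infinity, then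
`s(1−s)Γ(s)⁻¹ ∫₀^∞ f(t) t^{s-1} dt` extends to a function `h` analytic on
`{Re s > −1} \ {2, …, N}` with `h(0) = 0` and `h′(0) = a₀`. -/
theorem hessian_zeta_value_and_derivative_at_zero
    (N : ℕ) (hN : 1 ≤ N) (a : ℕ → ℂ) (f : ℝ → ℂ)
    (hf : ContinuousOn f (Ioi 0)) (C δ : ℝ) (hC : 0 < C) (hδ : 0 < δ)
    (h0 : ∀ t : ℝ, 0 < t → t ≤ 1 →
      ‖f t - (∑ k ∈ Finset.Icc 1 N, a k * (t : ℂ) ^ (-(k : ℤ))) - a 0‖ ≤ C * t)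
    (hinf : ∀ t : ℝ, 1 ≤ t → ‖f t‖ ≤ C * Real.exp (-δ * t)) :
    ∃ h : ℂ → ℂ,
      AnalyticOnNhd ℂ h
        ({s : ℂ | -1 < s.re} \ {s : ℂ | ∃ k : ℕ, 2 ≤ k ∧ k ≤ N ∧ s = (k : ℂ)}) ∧
      (∀ s : ℂ, (N : ℝ) < s.re →
        h s = s * (1 - s) * (Complex.Gamma s)⁻¹ *
          ∫ t in Ioi (0 : ℝ), f t * (t : ℂ) ^ (s - 1)) ∧
      h 0 = 0 ∧ deriv h 0 = a 0 := by
  classical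
  set P : ℝ → ℂ := fun t => (∑ k ∈ Finset.Icc 1 N, a k * (t : ℂ) ^ (-(k : ℤ))) + a 0 with hP
  set F : ℝ → ℂ := fun t => f t - Set.indicator (Ioc 0 1) P t with hFdef
  -- local integrability of F
  have hPcont : ContinuousOn P (Ioi 0) := by
    refine ContinuousOn.add ?_ continuousOn_const
    refine continuousOn_finset_sum _ (fun k _ => continuousOn_const.mul ?_)
    intro t ht
    exact ((continuousAt_zpow₀ ((t : ℂ)) _
      (Or.inl (Complex.ofReal_ne_zero.mpr (mem_Ioi.mp ht).ne'))).comp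
      Complex.continuous_ofReal.continuousAt).continuousWithinAt
  have hPloc : LocallyIntegrableOn P (Ioi 0) := hPcont.locallyIntegrableOn measurableSet_Ioi
  have hQloc : LocallyIntegrableOn (Set.indicator (Ioc 0 1) P) (Ioi 0) := by
    intro x hx
    obtain ⟨U, hU, hint⟩ := hPloc x hx
    exact ⟨U, hU, hint.indicator measurableSet_Ioc⟩
  have hfloc : LocallyIntegrableOn f (Ioi 0) := hf.locallyIntegrableOn measurableSet_Ioi
  have hFloc : LocallyIntegrableOn F (Ioi 0) := hfloc.sub hQloc
  -- asymptotics of F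
  have hFtop : F =O[atTop] fun t => Real.exp (-δ * t) := by
    rw [isBigO_iff]
    refine ⟨C, ?_⟩
    filter_upwards [eventually_ge_atTop (2 : ℝ)] with t ht
    have h1 : (1 : ℝ) < t := by linarith
    have hind : Set.indicator (Ioc 0 1) P t = 0 :=
      indicator_of_notMem (fun hmem => absurd hmem.2 (not_le.mpr h1)) _
    have : F t = f t := by simp [hFdef, hind]
    rw [this, Real.norm_eq_abs, abs_of_pos (Real.exp_pos _)]
    exact hinf t (by linarith)
  have hFbot : F =O[nhdsWithin (0 : ℝ) (Ioi 0)] (fun t : ℝ => t ^ (-(-1 : ℝ))) := by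
    rw [isBigO_iff]
    refine ⟨C, ?_⟩
    filter_upwards [Ioc_mem_nhdsGT_of_mem (by norm_num : (0 : ℝ) ∈ Ico (0 : ℝ) 1)] with t ht
    have ht0 : 0 < t := ht.1
    have hind : Set.indicator (Ioc 0 1) P t = P t := indicator_of_mem ht _
    have hFt : F t = f t - (∑ k ∈ Finset.Icc 1 N, a k * (t : ℂ) ^ (-(k : ℤ))) - a 0 := by
      simp only [hFdef, hind]; simp only [hP]; ring
    rw [hFt]
    have : ‖t ^ (-(-1 : ℝ))‖ = t := by
      rw [neg_neg, Real.rpow_one, Real.norm_eq_abs, abs_of_pos ht0]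
    rw [this]
    exact h0 t ht0 ht.2
  have hGdiff : ∀ s : ℂ, -1 < s.re → DifferentiableAt ℂ (mellin F) s := fun s hs =>
    mellin_differentiableAt_of_isBigO_rpow_exp hδ hFloc hFtop hFbot hs
  have hFconv : ∀ s : ℂ, -1 < s.re → MellinConvergent F s := fun s hs =>
    mellinConvergent_of_isBigO_rpow_exp hδ hFloc hFtop hFbot hs
  -- the analytic extension
  set h : ℂ → ℂ := fun s => (Complex.Gamma (s + 1))⁻¹ *
      ((1 - s) * s ^ 2 * mellin F s + (s - s ^ 2) * a 0 - s ^ 2 * a 1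
        + ∑ k ∈ Finset.Icc 2 N, a k * ((1 - s) * s ^ 2 / (s - (k : ℂ)))) with hh
  have hΓdiff : Differentiable ℂ (fun s : ℂ => (Complex.Gamma (s + 1))⁻¹) :=
    Complex.differentiable_one_div_Gamma.comp (differentiable_id.add_const 1)
  refine ⟨h, ?_, ?_, ?_, ?_⟩
  · -- analyticity
    have hfin : ({s : ℂ | ∃ k : ℕ, 2 ≤ k ∧ k ≤ N ∧ s = (k : ℂ)}).Finite := by
      refine Set.Finite.subset ((Set.finite_Icc (2 : ℕ) N).image (fun k : ℕ => (k : ℂ))) ?_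
      rintro s ⟨k, h2, hN', rfl⟩
      exact ⟨k, ⟨h2, hN'⟩, rfl⟩
    have hopen : IsOpen ({s : ℂ | -1 < s.re} \
        {s : ℂ | ∃ k : ℕ, 2 ≤ k ∧ k ≤ N ∧ s = (k : ℂ)}) := by
      rw [diff_eq]
      exact (isOpen_lt continuous_const Complex.continuous_re).inter
        hfin.isClosed.isOpen_compl
    refine DifferentiableOn.analyticOnNhd (fun s hs => ?_) hopen
    obtain ⟨hs1, hs2⟩ := hs
    refine DifferentiableAt.differentiableWithinAt ?_
    refine (hΓdiff.differentiableAt).mul ?_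
    have hGd : DifferentiableAt ℂ (mellin F) s := hGdiff s hs1
    refine DifferentiableAt.add ?_ ?_
    · refine DifferentiableAt.sub ?_ (by fun_prop)
      exact (DifferentiableAt.mul (by fun_prop) hGd).add (by fun_prop)
    · refine DifferentiableAt.fun_sum (fun k hk => ?_)
      have hk' := Finset.mem_Icc.mp hk
      have hne : s - (k : ℂ) ≠ 0 := by
        refine sub_ne_zero.mpr (fun hsk => hs2 ⟨k, hk'.1, hk'.2, hsk⟩)
      exact (differentiableAt_const _).mul
        (DifferentiableAt.div (by fun_prop) (by fun_prop) hne)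
  · -- value for re s > N
    intro s hs
    have hNre : (1 : ℝ) ≤ (N : ℝ) := by exact_mod_cast hN
    have hsre1 : 1 < s.re := lt_of_le_of_lt hNre hs
    have hsre0 : 0 < s.re := lt_trans one_pos hsre1
    have hs0 : s ≠ 0 := fun h' => by simp [h'] at hsre0
    have hs1 : s ≠ 1 := fun h' => by rw [h'] at hsre1; simp at hsre1
    -- Mellin of the indicator part
    have hQmell : HasMellin (Set.indicator (Ioc 0 1) P) s
        ((∑ k ∈ Finset.Icc 1 N, a k * (1 / (s - (k : ℂ)))) + a 0 * (1 / s)) := by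
      have hdecomp : Set.indicator (Ioc 0 1) P = fun t =>
          (∑ k ∈ Finset.Icc 1 N, a k *
            Set.indicator (Ioc 0 1) (fun t : ℝ => (t : ℂ) ^ (-(k : ℂ))) t)
          + a 0 * Set.indicator (Ioc 0 1) (fun _ => (1 : ℂ)) t := by
        funext t
        by_cases hmem : t ∈ Ioc 0 1
        · simp only [indicator_of_mem hmem, hP, mul_one]
          congr 1
          refine Finset.sum_congr rfl (fun k _ => ?_)
          congr 1
          rw [show -(k : ℂ) = ((-(k : ℤ) : ℤ) : ℂ) by push_cast; ring,
            Complex.cpow_intCast]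
        · simp [indicator_of_notMem hmem]
      rw [hdecomp]
      have hsum : HasMellin (fun t => ∑ k ∈ Finset.Icc 1 N, a k *
            Set.indicator (Ioc 0 1) (fun t : ℝ => (t : ℂ) ^ (-(k : ℂ))) t) s
          (∑ k ∈ Finset.Icc 1 N, a k * (1 / (s - (k : ℂ)))) := by
        refine hasMellin_finset_sum _ _ _ (fun k hk => ?_)
        have hk' := (Finset.mem_Icc.mp hk).2
        have hkr : (k : ℝ) ≤ (N : ℝ) := by exact_mod_cast hk'
        have hpos : 0 < s.re + (-(k : ℂ)).re := by
          simp only [Complex.neg_re, Complex.natCast_re]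
          linarith
        have H := hasMellin_cpow_Ioc (-(k : ℂ)) hpos
        have H2 := hasMellin_const_smul' (a k) H
        simpa [sub_eq_add_neg] using H2
      have hconst := hasMellin_const_smul' (a 0) (hasMellin_one_Ioc hsre0)
      have := hasMellin_add hsum.1 hconst.1
      exact ⟨this.1, by rw [this.2, hsum.2, hconst.2]⟩
    -- split the Mellin transform of f
    have hsre1' : -1 < s.re := by linarith
    have hsplit : mellin f s = mellin F s +
        ((∑ k ∈ Finset.Icc 1 N, a k * (1 / (s - (k : ℂ)))) + a 0 * (1 / s)) := by
      have hadd := hasMellin_add (hFconv s hsre1') hQmell.1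
      have heq : (fun t => F t + Set.indicator (Ioc 0 1) P t) = f := by
        funext t; simp [hFdef]
      rw [heq] at hadd
      rw [hadd.2, hQmell.2]
    have hint : ∫ t in Ioi (0 : ℝ), f t * (t : ℂ) ^ (s - 1) = mellin f s := by
      rw [mellin]
      simp_rw [smul_eq_mul]
      exact setIntegral_congr_fun measurableSet_Ioi (fun t _ => mul_comm _ _)
    rw [hint, hsplit]
    have hGamma : (Complex.Gamma s)⁻¹ = s * (Complex.Gamma (s + 1))⁻¹ := by
      rw [Complex.Gamma_add_one s hs0, mul_inv, ← mul_assoc, mul_inv_cancel₀ hs0, one_mul]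
    rw [hGamma]
    simp only [hh]
    have hIcc : Finset.Icc 1 N = insert 1 (Finset.Icc 2 N) := by
      ext x; simp only [Finset.mem_Icc, Finset.mem_insert]; omega
    rw [hIcc, Finset.sum_insert (by simp [Finset.mem_Icc])]
    have hT : s * (1 - s) * s * (∑ k ∈ Finset.Icc 2 N, a k * (1 / (s - (k : ℂ)))) =
        ∑ k ∈ Finset.Icc 2 N, a k * ((1 - s) * s ^ 2 / (s - (k : ℂ))) := by
      rw [Finset.mul_sum]
      exact Finset.sum_congr rfl (fun k _ => by ring)
    have hs1' : s - 1 ≠ 0 := sub_ne_zero.mpr hs1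
    have e1 : s * (1 - s) * s * (a 1 * (1 / (s - 1))) = -(s ^ 2 * a 1) := by
      field_simp
      ring
    have e0 : s * (1 - s) * s * (a 0 * (1 / s)) = (s - s ^ 2) * a 0 := by
      field_simp
    linear_combination (-(Complex.Gamma (s + 1))⁻¹) * (hT + e1 + e0)
  · -- value at 0
    simp only [hh]
    norm_num
  · -- derivative at 0
    have hG0 : DifferentiableAt ℂ (mellin F) 0 := hGdiff 0 (by norm_num)
    have hu : HasDerivAt (fun s : ℂ => (1 - s) * s ^ 2) 0 0 := by
      have := ((hasDerivAt_const (0 : ℂ) (1 : ℂ)).sub (hasDerivAt_id 0)).mul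
        (hasDerivAt_pow 2 (0 : ℂ))
      exact this.congr_deriv (by simp)
    have T1 : HasDerivAt (fun s : ℂ => (1 - s) * s ^ 2 * mellin F s)
        (0 * mellin F 0 + (1 - 0) * 0 ^ 2 * deriv (mellin F) 0) 0 := hu.mul hG0.hasDerivAt
    have T2 : HasDerivAt (fun s : ℂ => (s - s ^ 2) * a 0)
        ((1 - 2 * 0 ^ (2 - 1)) * a 0) 0 :=
      ((hasDerivAt_id 0).sub (hasDerivAt_pow 2 (0 : ℂ))).mul_const (a 0)
    have T3 : HasDerivAt (fun s : ℂ => s ^ 2 * a 1) (2 * 0 ^ (2 - 1) * a 1) 0 :=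
      (hasDerivAt_pow 2 (0 : ℂ)).mul_const (a 1)
    have TS : HasDerivAt (fun s : ℂ => ∑ k ∈ Finset.Icc 2 N,
        a k * ((1 - s) * s ^ 2 / (s - (k : ℂ)))) 0 0 := by
      have := HasDerivAt.fun_sum (x := (0 : ℂ)) (u := Finset.Icc 2 N)
        (A := fun k (s : ℂ) => a k * ((1 - s) * s ^ 2 / (s - (k : ℂ))))
        (A' := fun k => (0 : ℂ)) (fun k hk => ?_)
      · simpa using this
      · have hk2 := (Finset.mem_Icc.mp hk).1
        have hkne : (0 : ℂ) - (k : ℂ) ≠ 0 := by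
          have : (k : ℂ) ≠ 0 := Nat.cast_ne_zero.mpr (by omega)
          simpa using this
        have hd : HasDerivAt (fun s : ℂ => s - (k : ℂ)) 1 0 :=
          (hasDerivAt_id 0).sub_const _
        have := (hu.div hd hkne).const_mul (a k)
        exact this.congr_deriv (by simp)
    have Hφ := ((T1.add T2).sub T3).add TS
    have HΓ : HasDerivAt (fun s : ℂ => (Complex.Gamma (s + 1))⁻¹)
        (deriv (fun s : ℂ => (Complex.Gamma (s + 1))⁻¹) 0) 0 :=
      (hΓdiff.differentiableAt).hasDerivAt
    have Hh := HΓ.mul Hφ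
    have : deriv h 0 = deriv (fun s : ℂ => (Complex.Gamma (s + 1))⁻¹) 0 *
        ((1 - 0) * 0 ^ 2 * mellin F 0 + (0 - 0 ^ 2) * a 0 - 0 ^ 2 * a 1
          + ∑ k ∈ Finset.Icc 2 N, a k * ((1 - 0) * 0 ^ 2 / (0 - (k : ℂ))))
        + (Complex.Gamma (0 + 1))⁻¹ *
          (0 * mellin F 0 + (1 - 0) * 0 ^ 2 * deriv (mellin F) 0
            + (1 - 2 * 0 ^ (2 - 1)) * a 0 - 2 * 0 ^ (2 - 1) * a 1 + 0) := Hh.deriv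
    rw [this]
    norm_num [Complex.Gamma_one]
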